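/- Let F be a field and C the split Cayley algebra over F. For c ∈ GL₂(F) and p ∈ SL₂(F) (i.e. det(p) = 1), define φ_{c,p} : C → C by φ_{c,p}((x | y)) = (c·x·c⁻¹ | p·c·y·c⁻¹). Then φ_{c,p} is an F-algebra automorphism of C, i.e. an F-linear bijection satisfying φ_{c,p}(u·v) = φ_{c,p}(u)·φ_{c,p}(v) for all u, v ∈ C, and it maps the subspace M₂(F) × {0} onto itself. -/

import Mathlib

open Matrix

/-- The underlying space of the split Cayley algebra over `F`: pairs `(x | y)` of 2×2
matrices. -/
abbrev Cayley (F : Type*) [Field F] := Matrix (Fin 2) (Fin 2) F × Matrix (Fin 2) (Fin 2) F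

variable {F : Type*} [Field F]

/-- Multiplication of the split Cayley algebra. -/
def cmul (a b : Cayley F) : Cayley F :=
  (a.1 * b.1 + (b.2).adjugate * a.2, b.2 * a.1 + a.2 * (b.1).adjugate)

/-- The map `φ_{c,p} (x | y) = (c·x·c⁻¹ | p·c·y·c⁻¹)` for `c ∈ GL₂(F)`, `p ∈ SL₂(F)`. -/
def phiMap (c : GL (Fin 2) F) (p : Matrix (Fin 2) (Fin 2) F) (z : Cayley F) : Cayley F :=
  ((c : Matrix (Fin 2) (Fin 2) F) * z.1 * ((c⁻¹ : GL (Fin 2) F) : Matrix (Fin 2) (Fin 2) F),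
   p * ((c : Matrix (Fin 2) (Fin 2) F) * z.2 * ((c⁻¹ : GL (Fin 2) F) : Matrix (Fin 2) (Fin 2) F)))

/-- For `c ∈ GL₂(F)` and `p` of determinant one, `φ_{c,p}` is an `F`-algebra
automorphism of the split Cayley algebra stabilizing the subspace `M₂(F) × {0}`. -/
theorem phiMap_is_automorphism (c : GL (Fin 2) F) (p : Matrix (Fin 2) (Fin 2) F)
    (hp : p.det = 1) :
    Function.Bijective (phiMap c p) ∧
    (∀ a b : Cayley F, phiMap c p (a + b) = phiMap c p a + phiMap c p b) ∧
    (∀ (r : F) (a : Cayley F), phiMap c p (r • a) = r • phiMap c p a) ∧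
    (∀ a b : Cayley F, phiMap c p (cmul a b) = cmul (phiMap c p a) (phiMap c p b)) ∧
    (phiMap c p) '' {z : Cayley F | z.2 = 0} = {z : Cayley F | z.2 = 0} := by
  set C : Matrix (Fin 2) (Fin 2) F := (c : Matrix (Fin 2) (Fin 2) F) with hC
  set Ci : Matrix (Fin 2) (Fin 2) F := ((c⁻¹ : GL (Fin 2) F) : Matrix (Fin 2) (Fin 2) F)
    with hCi
  have h1 : C * Ci = 1 := c.mul_inv
  have h2 : Ci * C = 1 := c.inv_mul
  have hcan1 : ∀ x : Matrix (Fin 2) (Fin 2) F, C * (Ci * x) = x := fun x => by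
    rw [← mul_assoc, h1, one_mul]
  have hcan2 : ∀ x : Matrix (Fin 2) (Fin 2) F, Ci * (C * x) = x := fun x => by
    rw [← mul_assoc, h2, one_mul]
  have hpadj : p.adjugate * p = 1 := by rw [Matrix.adjugate_mul, hp, one_smul]
  have hpadj' : p * p.adjugate = 1 := by rw [Matrix.mul_adjugate, hp, one_smul]
  have hcanp : ∀ x : Matrix (Fin 2) (Fin 2) F, p.adjugate * (p * x) = x := fun x => by
    rw [← mul_assoc, hpadj, one_mul]
  have hcanp' : ∀ x : Matrix (Fin 2) (Fin 2) F, p * (p.adjugate * x) = x := fun x => by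
    rw [← mul_assoc, hpadj', one_mul]
  -- determinant facts
  have hdet : C.det * Ci.det = 1 := by
    have := congrArg Matrix.det h1
    simpa [Matrix.det_mul] using this
  have hCinv : C⁻¹ = Ci := by
    apply Matrix.inv_eq_right_inv h1
  have hCiinv : Ci⁻¹ = C := by
    apply Matrix.inv_eq_right_inv h2
  have hC0 : C.det ≠ 0 := fun h => by simp [h] at hdet
  have hCi0 : Ci.det ≠ 0 := fun h => by simp [h] at hdet
  have hadjC : C.adjugate = C.det • Ci := by
    rw [← hCinv, Matrix.inv_def, smul_smul, Ring.inverse_eq_inv, mul_inv_cancel₀ hC0, one_smul]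
  have hadjCi : Ci.adjugate = Ci.det • C := by
    rw [← hCiinv, Matrix.inv_def, smul_smul, Ring.inverse_eq_inv, mul_inv_cancel₀ hCi0, one_smul]
  have key : ∀ X : Matrix (Fin 2) (Fin 2) F,
      (C * X * Ci).adjugate = C * X.adjugate * Ci := by
    intro X
    simp only [Matrix.adjugate_mul_distrib, hadjC, hadjCi, Matrix.smul_mul,
      Matrix.mul_smul, smul_smul, mul_assoc]
    rw [hdet, one_smul]
  -- explicit inverse
  have hinv : Function.LeftInverse
      (fun z : Cayley F => (Ci * z.1 * C, Ci * (p.adjugate * z.2) * C)) (phiMap c p) ∧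
      Function.RightInverse
      (fun z : Cayley F => (Ci * z.1 * C, Ci * (p.adjugate * z.2) * C)) (phiMap c p) := by
    constructor <;> intro z <;>
      simp [phiMap, ← hC, ← hCi, mul_assoc, hcan1, hcan2, hcanp, hcanp', h1, h2]
  refine ⟨⟨hinv.1.injective, hinv.2.surjective⟩, ?_, ?_, ?_, ?_⟩
  · intro a b
    simp [phiMap, mul_add, add_mul, Prod.ext_iff]
  · intro r a
    simp [phiMap, Matrix.mul_smul, Matrix.smul_mul, Prod.ext_iff]
  · intro a b
    have hadjp : ∀ X : Matrix (Fin 2) (Fin 2) F,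
        (p * X).adjugate = X.adjugate * p.adjugate := fun X =>
      Matrix.adjugate_mul_distrib p X
    simp only [phiMap, cmul, ← hC, ← hCi, hadjp, key, Prod.mk.injEq]
    constructor
    · simp only [mul_add, add_mul, mul_assoc, hcan2, hcanp]
    · simp only [mul_add, add_mul, mul_assoc, hcan2, hcanp]
  · ext z
    simp only [Set.mem_image, Set.mem_setOf_eq]
    constructor
    · rintro ⟨w, hw, rfl⟩
      simp [phiMap, hw]
    · intro hz
      refine ⟨(Ci * z.1 * C, 0), rfl, ?_⟩
      have : phiMap c p (Ci * z.1 * C, 0) = (z.1, 0) := by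
        simp [phiMap, ← hC, ← hCi, mul_assoc, hcan1, hcan2, h1]
      rw [this]
      exact Prod.ext rfl hz.symm
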